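/- arXiv:1307.1365 — 2 statements merged into one kernel-verified Lean document; each statement's English description precedes it below -/
import Mathlib

section
/- Let (B_s)_{s≥0} be a standard Brownian motion, let t ≥ 1, let 0 ≤ u ≤ t - 1, let z ≥ 0, and let A be an event measurable with respect to the σ-algebra generated by (B_{s+u} - B_u)_{s ∈ [0,1]}. Then there exists a universal constant c > 0 such that P(B_t ∈ [z, z+1] and A) ≤ c/√t · P(A). -/
open MeasureTheory ProbabilityTheory Set Real
open scoped NNReal ENNReal

/-- A standard one-dimensional Brownian motion started at 0: continuous paths,
stationary Gaussian increments, and independent increments. -/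
structure IsBrownianMotion {Ω : Type*} [MeasurableSpace Ω] (P : Measure Ω)
    (B : ℝ → Ω → ℝ) : Prop where
  isProbability : IsProbabilityMeasure P
  measurable : ∀ t : ℝ, Measurable (B t)
  init : ∀ ω, B 0 ω = 0
  cont : ∀ ω, Continuous fun t => B t ω
  gaussian_incr : ∀ s t : ℝ, 0 ≤ s → s ≤ t →
    P.map (fun ω => B t ω - B s ω) = gaussianReal 0 (Real.toNNReal (t - s))
  indep_incr : ∀ (n : ℕ) (τ : Fin (n + 1) → ℝ), Monotone τ → 0 ≤ τ 0 →
    iIndepFun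
      (fun i : Fin n => fun ω => B (τ i.succ) ω - B (τ i.castSucc) ω) P


lemma gauss_Icc_le (m : ℝ) (v : ℝ≥0) (hv : v ≠ 0) (a : ℝ) :
    gaussianReal m v (Set.Icc a (a + 1)) ≤ ENNReal.ofReal ((Real.sqrt (2 * π * v))⁻¹) := by
  rw [gaussianReal_apply _ hv]
  calc ∫⁻ x in Set.Icc a (a + 1), gaussianPDF m v x
      ≤ ∫⁻ _x in Set.Icc a (a + 1), ENNReal.ofReal ((Real.sqrt (2 * π * v))⁻¹) := by
        refine lintegral_mono fun x => ?_
        rw [gaussianPDF]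
        refine ENNReal.ofReal_le_ofReal ?_
        rw [gaussianPDFReal]
        have h1 : Real.exp (-(x - m) ^ 2 / (2 * v)) ≤ 1 := by
          rw [Real.exp_le_one_iff]
          apply div_nonpos_of_nonpos_of_nonneg
          · simp [sq_nonneg]
          · positivity
        have h2 : (0:ℝ) ≤ (Real.sqrt (2 * π * v))⁻¹ := by positivity
        calc (Real.sqrt (2 * π * v))⁻¹ * Real.exp (-(x - m) ^ 2 / (2 * v))
            ≤ (Real.sqrt (2 * π * v))⁻¹ * 1 := by nlinarith [Real.exp_pos (-(x - m) ^ 2 / (2 * v))]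
          _ = (Real.sqrt (2 * π * v))⁻¹ := mul_one _
    _ = ENNReal.ofReal ((Real.sqrt (2 * π * v))⁻¹) * volume (Set.Icc a (a + 1)) :=
        setLIntegral_const _ _
    _ ≤ ENNReal.ofReal ((Real.sqrt (2 * π * v))⁻¹) := by
        rw [Real.volume_Icc]
        simp

lemma prod_sum_Icc_le_left (ν : Measure ℝ) [IsProbabilityMeasure ν] (m : ℝ) (v : ℝ≥0)
    (hv : v ≠ 0) (a : ℝ) :
    ((gaussianReal m v).prod ν) {p : ℝ × ℝ | p.1 + p.2 ∈ Set.Icc a (a + 1)}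
      ≤ ENNReal.ofReal ((Real.sqrt (2 * π * v))⁻¹) := by
  have hsm : MeasurableSet {p : ℝ × ℝ | p.1 + p.2 ∈ Set.Icc a (a + 1)} :=
    (measurable_fst.add measurable_snd) measurableSet_Icc
  rw [Measure.prod_apply_symm hsm]
  calc ∫⁻ y, gaussianReal m v ((fun x => (x, y)) ⁻¹' {p : ℝ × ℝ | p.1 + p.2 ∈ Set.Icc a (a + 1)}) ∂ν
      ≤ ∫⁻ _y, ENNReal.ofReal ((Real.sqrt (2 * π * v))⁻¹) ∂ν := by
        refine lintegral_mono fun y => ?_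
        have : ((fun x => (x, y)) ⁻¹' {p : ℝ × ℝ | p.1 + p.2 ∈ Set.Icc a (a + 1)})
            = Set.Icc (a - y) ((a - y) + 1) := by
          ext x
          simp only [Set.mem_preimage, Set.mem_setOf_eq, Set.mem_Icc]
          constructor <;> intro h <;> constructor <;> linarith [h.1, h.2]
        rw [this]
        exact gauss_Icc_le m v hv _
    _ = ENNReal.ofReal ((Real.sqrt (2 * π * v))⁻¹) := by
        rw [lintegral_const, measure_univ, mul_one]

lemma prod_sum_Icc_le_right (ν : Measure ℝ) [IsProbabilityMeasure ν] (m : ℝ) (v : ℝ≥0)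
    (hv : v ≠ 0) (a : ℝ) :
    (ν.prod (gaussianReal m v)) {p : ℝ × ℝ | p.1 + p.2 ∈ Set.Icc a (a + 1)}
      ≤ ENNReal.ofReal ((Real.sqrt (2 * π * v))⁻¹) := by
  have hsm : MeasurableSet {p : ℝ × ℝ | p.1 + p.2 ∈ Set.Icc a (a + 1)} :=
    (measurable_fst.add measurable_snd) measurableSet_Icc
  rw [Measure.prod_apply hsm]
  calc ∫⁻ x, gaussianReal m v (Prod.mk x ⁻¹' {p : ℝ × ℝ | p.1 + p.2 ∈ Set.Icc a (a + 1)}) ∂ν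
      ≤ ∫⁻ _x, ENNReal.ofReal ((Real.sqrt (2 * π * v))⁻¹) ∂ν := by
        refine lintegral_mono fun x => ?_
        have : (Prod.mk x ⁻¹' {p : ℝ × ℝ | p.1 + p.2 ∈ Set.Icc a (a + 1)})
            = Set.Icc (a - x) ((a - x) + 1) := by
          ext y
          simp only [Set.mem_preimage, Set.mem_setOf_eq, Set.mem_Icc]
          constructor <;> intro h <;> constructor <;> linarith [h.1, h.2]
        rw [this]
        exact gauss_Icc_le m v hv _
    _ = ENNReal.ofReal ((Real.sqrt (2 * π * v))⁻¹) := by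
        rw [lintegral_const, measure_univ, mul_one]

lemma indepFun_pair_vec {Ω : Type*} [MeasurableSpace Ω] {P : Measure Ω} {B : ℝ → Ω → ℝ}
    (hB : IsBrownianMotion P B) (t u : ℝ) (hu : 0 ≤ u) (hut : u + 1 ≤ t)
    (pt : Finset ℝ) (hpt : ↑pt ⊆ Set.Icc (0:ℝ) 1) :
    IndepFun (fun ω => (B u ω, B t ω - B (u+1) ω))
      (fun ω (i : pt) => B ((i : ℝ) + u) ω - B u ω) P := by
  classical
  set n := pt.card with hn
  set σ : Fin n ≃o pt := pt.orderIsoOfFin rfl with hσ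
  set sval : Fin n → ℝ := fun j => ((σ j : pt) : ℝ) with hsval
  have hs0 : ∀ j, 0 ≤ sval j := fun j => (hpt (σ j).2).1
  have hs1 : ∀ j, sval j ≤ 1 := fun j => (hpt (σ j).2).2
  have hsmono : Monotone sval := fun j j' h => Subtype.coe_le_coe.2 (σ.monotone h)
  have haux1 : ∀ j : Fin n, u ≤ u + sval j := fun j => by linarith [hs0 j]
  have haux2 : ∀ j : Fin n, u + sval j ≤ u + 1 := fun j => by linarith [hs1 j]
  set ρ : ℕ → ℝ := fun k =>
    if k = 0 then 0
    else if k = 1 then u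
    else if h : 2 ≤ k ∧ k ≤ n + 1 then u + sval ⟨k - 2, by omega⟩
    else if k = n + 2 then u + 1
    else t with hρ
  have hρ0 : ρ 0 = 0 := by simp [hρ]
  have hρ1 : ρ 1 = u := by simp [hρ]
  have hρmid : ∀ k (h1 : 2 ≤ k) (h2 : k ≤ n + 1), ρ k = u + sval ⟨k - 2, by omega⟩ := by
    intro k h1 h2
    simp only [hρ]
    rw [if_neg (by omega), if_neg (by omega), dif_pos ⟨h1, h2⟩]
  have hρn2 : ρ (n + 2) = u + 1 := by
    simp only [hρ]
    rw [if_neg (by omega), if_neg (by omega), dif_neg (by omega)]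
    simp
  have hρtop : ∀ k, n + 3 ≤ k → ρ k = t := by
    intro k hk
    simp only [hρ]
    rw [if_neg (by omega), if_neg (by omega), dif_neg (by omega), if_neg (by omega)]
  have hρmono : Monotone ρ := by
    refine monotone_nat_of_le_succ fun k => ?_
    rcases Nat.lt_or_ge k 2 with hk2 | hk2
    · interval_cases k
      · show ρ 0 ≤ ρ 1
        rw [hρ0, hρ1]; exact hu
      · show ρ 1 ≤ ρ 2
        rw [hρ1]
        by_cases hcase : 1 ≤ n
        · rw [hρmid 2 le_rfl (by omega)]
          exact haux1 _
        · rw [show (2:ℕ) = n + 2 by omega, hρn2]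
          linarith
    rcases Nat.lt_or_ge k (n + 1) with h3 | h3
    · rw [hρmid k hk2 (by omega), hρmid (k+1) (by omega) (by omega)]
      exact add_le_add le_rfl (hsmono (Fin.mk_le_mk.2 (by omega)))
    rcases Nat.eq_or_lt_of_le h3 with h4 | h4
    · rw [hρmid k hk2 (by omega), show k + 1 = n + 2 by omega, hρn2]
      exact haux2 _
    rcases Nat.eq_or_lt_of_le (show n + 2 ≤ k by omega) with h5 | h5
    · rw [← h5, hρn2, hρtop (n + 2 + 1) (by omega)]
      linarith
    · rw [hρtop k (by omega), hρtop (k+1) (by omega)]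
  set τ : Fin (n + 3 + 1) → ℝ := fun i => ρ i.val with hτ
  have hτmono : Monotone τ := fun i j hij => hρmono hij
  have hiid := hB.indep_incr (n + 3) τ hτmono (by simp [hτ, hρ0])
  set g : Fin (n + 3) → Ω → ℝ := fun i ω => B (τ i.succ) ω - B (τ i.castSucc) ω with hg
  have hg_meas : ∀ i, Measurable (g i) := fun i => (hB.measurable _).sub (hB.measurable _)
  set S : Finset (Fin (n + 3)) := {⟨0, by omega⟩, ⟨n + 2, by omega⟩} with hS
  set T : Finset (Fin (n + 3)) := Finset.univ.filter (fun i => 1 ≤ i.val ∧ i.val ≤ n) with hT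
  have hST : Disjoint S T := by
    rw [Finset.disjoint_left]
    intro a ha hb
    simp only [hS, Finset.mem_insert, Finset.mem_singleton] at ha
    simp only [hT, Finset.mem_filter, Finset.mem_univ, true_and] at hb
    rcases ha with rfl | rfl <;> simp at hb <;> omega
  have hIF := hiid.indepFun_finset S T hST hg_meas
  have hmem0 : (⟨0, by omega⟩ : Fin (n+3)) ∈ S := by simp [hS]
  have hmemn2 : (⟨n + 2, by omega⟩ : Fin (n+3)) ∈ S := by simp [hS]
  set φ : (S → ℝ) → ℝ × ℝ := fun w => (w ⟨⟨0, by omega⟩, hmem0⟩, w ⟨⟨n + 2, by omega⟩, hmemn2⟩)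
    with hφ
  have hφm : Measurable φ := (measurable_pi_apply _).prodMk (measurable_pi_apply _)
  have hTmem : ∀ (j : ℕ) (h2 : j + 1 ≤ n), (⟨j + 1, by omega⟩ : Fin (n+3)) ∈ T := by
    intro j h2
    simp only [hT, Finset.mem_filter, Finset.mem_univ, true_and]
    exact ⟨by omega, h2⟩
  set ψ : (T → ℝ) → (pt → ℝ) := fun w i =>
    ∑ j ∈ Finset.range ((σ.symm i).val + 1),
      (if h : j + 1 ≤ n then w ⟨⟨j + 1, by omega⟩, hTmem j h⟩ else 0)
    with hψ
  have hψm : Measurable ψ := by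
    refine measurable_pi_lambda _ fun i => Finset.measurable_sum _ fun j _ => ?_
    split_ifs with h
    · exact measurable_pi_apply _
    · exact measurable_const
  have hcomp := hIF.comp hφm hψm
  have hleft : (φ ∘ fun a (i : S) => g i a) = fun ω => (B u ω, B t ω - B (u+1) ω) := by
    funext a
    show (B (ρ 1) a - B (ρ 0) a, B (ρ (n + 3)) a - B (ρ (n + 2)) a)
      = (B u a, B t a - B (u + 1) a)
    rw [hρ0, hρ1, hρn2, hρtop (n + 3) le_rfl, hB.init, sub_zero]
  have hright : (ψ ∘ fun a (i : T) => g i a) = fun ω (i : pt) => B ((i : ℝ) + u) ω - B u ω := by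
    funext a i
    show ∑ j ∈ Finset.range ((σ.symm i).val + 1),
        (if h : j + 1 ≤ n then g ⟨j + 1, by omega⟩ a else 0)
      = B ((i : ℝ) + u) a - B u a
    set k := (σ.symm i).val with hk
    have hkn : k < n := (σ.symm i).isLt
    have hterm : ∀ j ∈ Finset.range (k + 1),
        (if h : j + 1 ≤ n then g ⟨j + 1, by omega⟩ a else 0)
        = B (ρ (j + 1 + 1)) a - B (ρ (j + 1)) a := by
      intro j hj
      rw [Finset.mem_range] at hj
      rw [dif_pos (show j + 1 ≤ n by omega)]
      rfl
    rw [Finset.sum_congr rfl hterm]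
    have htel : ∑ j ∈ Finset.range (k + 1), (B (ρ (j + 1 + 1)) a - B (ρ (j + 1)) a)
        = B (ρ (k + 1 + 1)) a - B (ρ (0 + 1)) a :=
      Finset.sum_range_sub (fun j => B (ρ (j + 1)) a) (k + 1)
    rw [htel]
    have h1 : ρ (0 + 1) = u := hρ1
    have h2 : ρ (k + 1 + 1) = u + sval ⟨k + 2 - 2, by omega⟩ :=
      hρmid (k + 2) (by omega) (by omega)
    rw [h1, h2]
    have h4 : (⟨k + 2 - 2, by omega⟩ : Fin n) = σ.symm i := by
      apply Fin.ext
      show k + 2 - 2 = (σ.symm i).val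
      omega
    have h5 : σ (⟨k + 2 - 2, by omega⟩ : Fin n) = i := by
      rw [h4]
      exact σ.apply_symm_apply i
    have h3 : sval ⟨k + 2 - 2, by omega⟩ = (i : ℝ) :=
      congrArg (fun x : pt => (x : ℝ)) h5
    have h6 : u + sval ⟨k + 2 - 2, by omega⟩ = (i : ℝ) + u := by
      rw [h3, add_comm]
    rw [h6]
  rw [hleft, hright] at hcomp
  exact hcomp

lemma indep_pair_iSup {Ω : Type*} [MeasurableSpace Ω] {P : Measure Ω} {B : ℝ → Ω → ℝ}
    (hB : IsBrownianMotion P B) (t u : ℝ) (hu : 0 ≤ u) (hut : u + 1 ≤ t) :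
    Indep (MeasurableSpace.comap (fun ω => (B u ω, B t ω - B (u+1) ω)) inferInstance)
      (⨆ s ∈ Set.Icc (0:ℝ) 1,
        MeasurableSpace.comap (fun ω => B (s + u) ω - B u ω) inferInstance) P := by
  classical
  haveI := hB.isProbability
  set m2 : ℝ → MeasurableSpace Ω :=
    fun s => MeasurableSpace.comap (fun ω => B (s + u) ω - B u ω) inferInstance with hm2
  refine IndepSets.indep
    (((hB.measurable u).prodMk ((hB.measurable t).sub (hB.measurable (u+1)))).comap_le)
    (iSup₂_le fun s _ => ((hB.measurable (s+u)).sub (hB.measurable u)).comap_le)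
    (@MeasurableSpace.isPiSystem_measurableSet Ω
      (MeasurableSpace.comap (fun ω => (B u ω, B t ω - B (u+1) ω)) inferInstance))
    (isPiSystem_piiUnionInter (fun s => {ts | MeasurableSet[m2 s] ts})
      (fun s => @MeasurableSpace.isPiSystem_measurableSet Ω (m2 s)) (Set.Icc (0:ℝ) 1))
    (@MeasurableSpace.generateFrom_measurableSet Ω
      (MeasurableSpace.comap (fun ω => (B u ω, B t ω - B (u+1) ω)) inferInstance)).symm
    ((generateFrom_piiUnionInter_measurableSet m2 (Set.Icc (0:ℝ) 1)).symm)
    ?_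
  rintro s1 s2 ⟨E1, hE1m, rfl⟩ ⟨ptf, hptS, ft, hft, rfl⟩
  have hch : ∀ x : ℝ, ∃ E : Set ℝ, MeasurableSet E ∧
      (x ∈ ptf → (fun ω => B (x + u) ω - B u ω) ⁻¹' E = ft x) := by
    intro x
    by_cases hx : x ∈ ptf
    · obtain ⟨E, hEm, hEq⟩ := hft x hx
      exact ⟨E, hEm, fun _ => hEq⟩
    · exact ⟨Set.univ, MeasurableSet.univ, fun h => absurd h hx⟩
  choose E hEm hEq using hch
  have hVec := indepFun_pair_vec hB t u hu hut ptf (by exact_mod_cast hptS)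
  have key := hVec.measure_inter_preimage_eq_mul (μ := P) E1
    (Set.univ.pi fun i : ptf => E (i : ℝ)) hE1m
    (MeasurableSet.univ_pi fun i => hEm (i : ℝ))
  have hset : (fun ω (i : ptf) => B ((i : ℝ) + u) ω - B u ω) ⁻¹'
      (Set.univ.pi fun i : ptf => E (i : ℝ)) = ⋂ x ∈ ptf, ft x := by
    ext ω
    simp only [Set.mem_preimage, Set.mem_pi, Set.mem_univ, forall_true_left, Set.mem_iInter]
    constructor
    · intro h x hx
      rw [← hEq x hx]
      exact h ⟨x, hx⟩
    · intro h i
      have := h (i : ℝ) i.2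
      rw [← hEq (i : ℝ) i.2] at this
      exact this
  rw [hset] at key
  refine Filter.Eventually.of_forall fun _ => ?_
  simpa only [Kernel.const_apply] using key

/-- There is a universal constant `c > 0` such that for any Brownian motion, `t ≥ 1`,
`0 ≤ u ≤ t - 1`, `z ≥ 0`, and any event `A` measurable with respect to the σ-algebra
generated by the increments `(B_{s+u} - B_u)_{s ∈ [0,1]}`,
`P({B_t ∈ [z, z+1]} ∩ A) ≤ c/√t · P(A)`. -/
theorem brownian_endpoint_with_increment_event
    {Ω : Type*} [MeasurableSpace Ω] (P : Measure Ω) (B : ℝ → Ω → ℝ)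
    (hB : IsBrownianMotion P B) :
    ∃ c : ℝ, 0 < c ∧ ∀ t u z : ℝ, 1 ≤ t → 0 ≤ u → u ≤ t - 1 → 0 ≤ z →
      ∀ A : Set Ω,
        MeasurableSet[⨆ s ∈ Set.Icc (0 : ℝ) 1,
          MeasurableSpace.comap (fun ω => B (s + u) ω - B u ω) inferInstance] A →
        P ({ω | B t ω ∈ Set.Icc z (z + 1)} ∩ A)
          ≤ ENNReal.ofReal (c / Real.sqrt t) * P A := by

  classical
  refine ⟨2, by norm_num, ?_⟩
  intro t u z ht hu hut hz A hA
  haveI := hB.isProbability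
  have hGle : (⨆ s ∈ Set.Icc (0:ℝ) 1,
      MeasurableSpace.comap (fun ω => B (s + u) ω - B u ω) inferInstance)
      ≤ ‹MeasurableSpace Ω› :=
    iSup₂_le fun s _ => ((hB.measurable _).sub (hB.measurable _)).comap_le
  have hAmeas : MeasurableSet A := hGle _ hA
  have ht0 : (0:ℝ) < t := by linarith
  have hsqrt_pos : 0 < Real.sqrt t := Real.sqrt_pos.2 ht0
  by_cases hct : t < 2
  · refine le_trans (measure_mono Set.inter_subset_right) ?_
    have h2 : Real.sqrt t ≤ 2 := by
      nlinarith [Real.sq_sqrt (le_of_lt ht0), Real.sqrt_nonneg t]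
    have h1 : (1:ℝ≥0∞) ≤ ENNReal.ofReal (2 / Real.sqrt t) := by
      rw [ENNReal.one_le_ofReal, le_div_iff₀ hsqrt_pos]
      linarith
    calc P A = 1 * P A := (one_mul _).symm
      _ ≤ _ := mul_le_mul_left h1 _
  · push_neg at hct
    have hut' : u + 1 ≤ t := by linarith
    set V : Ω → ℝ × ℝ := fun ω => (B u ω, B t ω - B (u+1) ω) with hV
    set W : Ω → ℝ × ℝ := fun ω =>
      (B (1 + u) ω - B u ω, Set.indicator A (fun _ => (1:ℝ)) ω) with hW
    have hVmeas : Measurable V :=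
      (hB.measurable u).prodMk ((hB.measurable t).sub (hB.measurable _))
    have hWmeas : Measurable W :=
      ((hB.measurable _).sub (hB.measurable _)).prodMk (measurable_const.indicator hAmeas)
    have hXG : Measurable[⨆ s ∈ Set.Icc (0:ℝ) 1,
        MeasurableSpace.comap (fun ω => B (s + u) ω - B u ω) inferInstance]
        (fun ω => B (1 + u) ω - B u ω) :=
      Measurable.of_comap_le (le_iSup₂ (f := fun (s : ℝ) (_ : s ∈ Set.Icc (0:ℝ) 1) =>
        MeasurableSpace.comap (fun ω => B (s + u) ω - B u ω) inferInstance)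
        1 ⟨zero_le_one, le_refl 1⟩)
    have hWG : Measurable[⨆ s ∈ Set.Icc (0:ℝ) 1,
        MeasurableSpace.comap (fun ω => B (s + u) ω - B u ω) inferInstance] W :=
      hXG.prodMk (measurable_const.indicator hA)
    have hIndep := indep_pair_iSup hB t u hu hut'
    have hVW : IndepFun V W P := by
      rw [IndepFun_iff_Indep]
      rw [Indep_iff] at hIndep ⊢
      intro t1 t2 h1 h2
      exact hIndep t1 t2 h1 (hWG.comap_le _ h2)
    -- independence of the two coordinates of V
    set ρ3 : ℕ → ℝ := fun k => if k = 0 then 0 else if k = 1 then u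
      else if k = 2 then u + 1 else t with hρ3
    have e0 : ρ3 0 = 0 := by simp [hρ3]
    have e1 : ρ3 1 = u := by simp [hρ3]
    have e2 : ρ3 2 = u + 1 := by simp [hρ3]
    have e3 : ∀ k, 3 ≤ k → ρ3 k = t := by
      intro k hk
      simp only [hρ3]
      rw [if_neg (by omega), if_neg (by omega), if_neg (by omega)]
    have hmono3 : Monotone ρ3 := by
      refine monotone_nat_of_le_succ fun k => ?_
      rcases k with _ | _ | _ | k
      · show ρ3 0 ≤ ρ3 1; rw [e0, e1]; exact hu
      · show ρ3 1 ≤ ρ3 2; rw [e1, e2]; linarith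
      · show ρ3 2 ≤ ρ3 3; rw [e2, e3 3 le_rfl]; linarith
      · rw [e3 _ (by omega), e3 _ (by omega)]
    set τ3 : Fin 4 → ℝ := fun i => ρ3 i.val with hτ3
    have hiid3 := hB.indep_incr 3 τ3 (fun i j hij => hmono3 hij)
      (by show (0:ℝ) ≤ ρ3 0; rw [e0])
    have hpair := hiid3.indepFun (show (0 : Fin 3) ≠ 2 by decide)
    have hl : (fun ω => B (τ3 (0 : Fin 3).succ) ω - B (τ3 (0:Fin 3).castSucc) ω)
        = fun ω => B u ω := by
      funext ω
      show B (ρ3 1) ω - B (ρ3 0) ω = B u ω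
      rw [e0, e1, hB.init, sub_zero]
    have hr : (fun ω => B (τ3 (2 : Fin 3).succ) ω - B (τ3 (2:Fin 3).castSucc) ω)
        = fun ω => B t ω - B (u+1) ω := by
      funext ω
      show B (ρ3 3) ω - B (ρ3 2) ω = _
      rw [e2, e3 3 le_rfl]
    rw [hl, hr] at hpair
    -- laws
    have hmapBu : P.map (fun ω => B u ω) = gaussianReal 0 (Real.toNNReal u) := by
      have h := hB.gaussian_incr 0 u le_rfl hu
      rw [show (fun ω => B u ω - B 0 ω) = fun ω => B u ω from
        funext fun ω => by rw [hB.init, sub_zero]] at h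
      simpa using h
    have hmapI2 : P.map (fun ω => B t ω - B (u+1) ω)
        = gaussianReal 0 (Real.toNNReal (t - (u+1))) :=
      hB.gaussian_incr (u+1) t (by linarith) hut'
    have hmapV : P.map V = (gaussianReal 0 (Real.toNNReal u)).prod
        (gaussianReal 0 (Real.toNNReal (t - (u+1)))) := by
      rw [← hmapBu, ← hmapI2]
      exact (indepFun_iff_map_prod_eq_prod_map_map ((hB.measurable u).aemeasurable)
        (((hB.measurable t).sub (hB.measurable _)).aemeasurable)).1 hpair
    have hmapVW : P.map (fun ω => (V ω, W ω)) = (P.map V).prod (P.map W) :=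
      (indepFun_iff_map_prod_eq_prod_map_map hVmeas.aemeasurable hWmeas.aemeasurable).1 hVW
    -- arithmetic bound
    have harith : ∀ v : ℝ, t/4 ≤ v → (Real.sqrt (2 * π * v))⁻¹ ≤ 2 / Real.sqrt t := by
      intro v hv
      have hv0 : (0:ℝ) < v := by linarith
      have h1 : Real.sqrt t / 2 ≤ Real.sqrt (2 * π * v) := by
        rw [Real.le_sqrt (by positivity) (by positivity)]
        rw [div_pow, Real.sq_sqrt (le_of_lt ht0)]
        nlinarith [Real.pi_gt_three]
      calc (Real.sqrt (2*π*v))⁻¹ ≤ (Real.sqrt t / 2)⁻¹ :=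
            inv_anti₀ (by positivity) h1
        _ = 2 / Real.sqrt t := by rw [inv_div]
    -- slice bound
    have hbound : ∀ a : ℝ,
        (P.map V) {v : ℝ × ℝ | v.1 + v.2 ∈ Set.Icc a (a + 1)}
          ≤ ENNReal.ofReal (2 / Real.sqrt t) := by
      intro a
      rw [hmapV]
      rcases le_total u ((t-1)/2) with hc | hc
      · have hv2 : (0:ℝ) < t - (u+1) := by linarith
        have hne : (Real.toNNReal (t - (u+1))) ≠ 0 := by
          simp only [ne_eq, Real.toNNReal_eq_zero, not_le]
          linarith
        refine le_trans (prod_sum_Icc_le_right (gaussianReal 0 (Real.toNNReal u)) 0 _ hne a) ?_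
        apply ENNReal.ofReal_le_ofReal
        have hcoe : ((Real.toNNReal (t - (u+1))) : ℝ) = t - (u+1) :=
          Real.coe_toNNReal _ (le_of_lt hv2)
        rw [hcoe]
        exact harith _ (by linarith)
      · have hv1 : (0:ℝ) < u := by linarith
        have hne : (Real.toNNReal u) ≠ 0 := by
          simp only [ne_eq, Real.toNNReal_eq_zero, not_le]
          linarith
        refine le_trans (prod_sum_Icc_le_left (gaussianReal 0 (Real.toNNReal (t - (u+1)))) 0 _
          hne a) ?_
        apply ENNReal.ofReal_le_ofReal
        have hcoe : ((Real.toNNReal u) : ℝ) = u := Real.coe_toNNReal _ (le_of_lt hv1)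
        rw [hcoe]
        exact harith _ (by linarith)
    -- event rewriting
    set Eset : Set ((ℝ × ℝ) × (ℝ × ℝ)) :=
      {p | p.1.1 + p.1.2 + p.2.1 ∈ Set.Icc z (z+1) ∧ p.2.2 = 1} with hEset
    have hEm : MeasurableSet Eset := by
      refine MeasurableSet.inter ?_ ?_
      · exact ((measurable_fst.fst.add measurable_fst.snd).add measurable_snd.fst)
          measurableSet_Icc
      · exact measurable_snd.snd (measurableSet_singleton 1)
    have hpre : {ω | B t ω ∈ Set.Icc z (z+1)} ∩ A = (fun ω => (V ω, W ω)) ⁻¹' Eset := by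
      ext ω
      have hBt : B u ω + (B t ω - B (u+1) ω) + (B (1+u) ω - B u ω) = B t ω := by
        rw [add_comm 1 u]; ring
      simp only [Set.mem_inter_iff, Set.mem_setOf_eq, Set.mem_preimage, hEset, hV, hW]
      by_cases hω : ω ∈ A
      · simp [Set.indicator_of_mem hω, hBt, hω]
      · simp [Set.indicator_of_notMem hω, hω]
    have hWs : MeasurableSet {w : ℝ × ℝ | w.2 = 1} :=
      measurable_snd (measurableSet_singleton 1)
    have hWA : W ⁻¹' {w : ℝ × ℝ | w.2 = 1} = A := by
      ext ω
      by_cases hω : ω ∈ A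
      · simp [hW, Set.indicator_of_mem hω, hω]
      · simp [hW, Set.indicator_of_notMem hω, hω]
    haveI : IsProbabilityMeasure (P.map V) := Measure.isProbabilityMeasure_map hVmeas.aemeasurable
    haveI : IsProbabilityMeasure (P.map W) := Measure.isProbabilityMeasure_map hWmeas.aemeasurable
    calc P ({ω | B t ω ∈ Set.Icc z (z+1)} ∩ A)
        = P.map (fun ω => (V ω, W ω)) Eset := by
          rw [Measure.map_apply (hVmeas.prodMk hWmeas) hEm, ← hpre]
      _ = ((P.map V).prod (P.map W)) Eset := by rw [hmapVW]
      _ = ∫⁻ w, (P.map V) ((fun v => (v, w)) ⁻¹' Eset) ∂(P.map W) :=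
          Measure.prod_apply_symm hEm
      _ ≤ ∫⁻ w, ENNReal.ofReal (2 / Real.sqrt t)
            * Set.indicator {w : ℝ × ℝ | w.2 = 1} 1 w ∂(P.map W) := by
          refine lintegral_mono fun w => ?_
          by_cases hw : w.2 = 1
          · have hslice : ((fun v => (v, w)) ⁻¹' Eset)
                = {v : ℝ × ℝ | v.1 + v.2 ∈ Set.Icc (z - w.1) ((z - w.1) + 1)} := by
              ext v
              simp only [Set.mem_preimage, hEset, Set.mem_setOf_eq, hw, and_true, Set.mem_Icc]
              constructor <;> intro h <;> exact ⟨by linarith [h.1], by linarith [h.2]⟩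
            rw [hslice, Set.indicator_of_mem (show w ∈ {w : ℝ × ℝ | w.2 = 1} from hw),
              Pi.one_apply, mul_one]
            exact hbound (z - w.1)
          · have hslice : ((fun v => (v, w)) ⁻¹' Eset) = ∅ := by
              ext v
              simp [hEset, hw]
            rw [hslice, Set.indicator_of_notMem (show w ∉ {w : ℝ × ℝ | w.2 = 1} from hw)]
            simp
      _ = ENNReal.ofReal (2 / Real.sqrt t) * (P.map W) {w : ℝ × ℝ | w.2 = 1} := by
          rw [lintegral_const_mul' _ _ ENNReal.ofReal_ne_top, lintegral_indicator_one hWs]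
      _ = ENNReal.ofReal (2 / Real.sqrt t) * P A := by
          rw [Measure.map_apply hWmeas hWs, hWA]
end

section
/- Let (R_t) be a three-dimensional Bessel process started from 0, with density P(R_t ∈ dx) = √(2/(π t³)) x² exp(-x²/(2t)) dx on (0,∞). Let m > 0, γ ∈ [0, m], and F : ℝ → [0, m] be continuous. Then as t → ∞ and b → ∞ with b ≥ t^{1/4}, t^{3/2} · E[ F(b - R_t) · 1{γ ≥ R_t - b + m ≥ 0} / (R_t + γ) ] = √(2/π) · b · e^{-b²/(2t)} · ∫_{m-γ}^{m} F(u) du · (1 + o(1)), where the o(1) is uniform over γ ∈ [0,m] and F bounded by m. In particular, the exact identity t^{3/2} E[F(b-R_t) 1{...}/(R_t+γ)] = √(2/π) ∫_{m-γ}^{m} F(u) (b-u)²/(b-u+γ) exp(-(b-u)²/(2t)) du holds for all t, b > 0 with b > m. -/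
open MeasureTheory Set

/-- Expectation against the time-`t` marginal density `√(2/(πt³)) x² e^{-x²/(2t)}` of the
three-dimensional Bessel process started from `0`, of the functional
`F(b - R_t) 1{γ ≥ R_t - b + m ≥ 0} / (R_t + γ)`. -/
noncomputable def besselExpectation (t b m γ : ℝ) (F : ℝ → ℝ) : ℝ :=
  ∫ x in Set.Ioi (0 : ℝ),
    Set.indicator {x : ℝ | 0 ≤ x - b + m ∧ x - b + m ≤ γ}
      (fun x => F (b - x) / (x + γ)) x *
    (Real.sqrt (2 / (Real.pi * t ^ 3)) * x ^ 2 * Real.exp (-(x ^ 2) / (2 * t)))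

lemma exact_id (t b m γ : ℝ) (ht : 0 < t) (hm : 0 < m) (hmb : m < b)
    (hγ0 : 0 ≤ γ) (hγm : γ ≤ m) (F : ℝ → ℝ) :
    t ^ ((3 : ℝ) / 2) * besselExpectation t b m γ F =
      Real.sqrt (2 / Real.pi) *
        ∫ u in (m - γ)..m,
          F u * ((b - u) ^ 2 / (b - u + γ)) * Real.exp (-((b - u) ^ 2) / (2 * t)) := by
  set c := Real.sqrt (2 / (Real.pi * t ^ 3)) with hc_def
  have hset : {x : ℝ | 0 ≤ x - b + m ∧ x - b + m ≤ γ} = Icc (b - m) (b - m + γ) := by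
    ext x
    simp only [Set.mem_setOf_eq, Set.mem_Icc]
    constructor <;> (rintro ⟨h1, h2⟩; constructor <;> linarith)
  have h1 : besselExpectation t b m γ F =
      ∫ x in Icc (b - m) (b - m + γ),
        F (b - x) / (x + γ) * (c * x ^ 2 * Real.exp (-(x ^ 2) / (2 * t))) := by
    unfold besselExpectation
    rw [hset]
    have heq : ∀ x : ℝ,
        (Icc (b - m) (b - m + γ)).indicator (fun x => F (b - x) / (x + γ)) x *
          (c * x ^ 2 * Real.exp (-(x ^ 2) / (2 * t))) =
        (Icc (b - m) (b - m + γ)).indicator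
          (fun x => F (b - x) / (x + γ) * (c * x ^ 2 * Real.exp (-(x ^ 2) / (2 * t)))) x :=
      fun x => (Set.indicator_mul_left (i := x) _ (fun x => F (b - x) / (x + γ))
        (fun x => c * x ^ 2 * Real.exp (-(x ^ 2) / (2 * t)))).symm
    simp_rw [← hc_def, heq]
    rw [MeasureTheory.setIntegral_indicator measurableSet_Icc,
      Set.inter_eq_self_of_subset_right]
    intro x hx
    exact Set.mem_Ioi.2 (lt_of_lt_of_le (by linarith) hx.1)
  rw [h1, MeasureTheory.integral_Icc_eq_integral_Ioc,
    ← intervalIntegral.integral_of_le (by linarith : b - m ≤ b - m + γ)]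
  have h2 : (∫ x in (b - m)..(b - m + γ),
        F (b - x) / (x + γ) * (c * x ^ 2 * Real.exp (-(x ^ 2) / (2 * t))))
      = ∫ x in (b - m)..(b - m + γ),
          (fun u => F u / (b - u + γ) *
            (c * (b - u) ^ 2 * Real.exp (-((b - u) ^ 2) / (2 * t)))) (b - x) :=
    intervalIntegral.integral_congr (fun x _ => by simp only [sub_sub_cancel])
  have h3 := intervalIntegral.integral_comp_sub_left (a := b - m) (b := b - m + γ)
    (fun u => F u / (b - u + γ) * (c * (b - u) ^ 2 * Real.exp (-((b - u) ^ 2) / (2 * t)))) b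
  rw [h2, h3,
    show b - (b - m + γ) = m - γ from by ring, show b - (b - m) = m from by ring,
    ← intervalIntegral.integral_const_mul, ← intervalIntegral.integral_const_mul]
  have hsq : Real.sqrt (t ^ 3) = t ^ ((3 : ℝ) / 2) := by
    rw [Real.sqrt_eq_rpow, ← Real.rpow_natCast t 3, ← Real.rpow_mul ht.le]
    norm_num
  have hc : t ^ ((3 : ℝ) / 2) * c = Real.sqrt (2 / Real.pi) := by
    rw [hc_def, show (2 : ℝ) / (Real.pi * t ^ 3) = (2 / Real.pi) * (t ^ 3)⁻¹ from by ring,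
      Real.sqrt_mul (by positivity), Real.sqrt_inv, hsq]
    have hne : t ^ ((3 : ℝ) / 2) ≠ 0 := (Real.rpow_pos_of_pos ht _).ne'
    field_simp
  apply intervalIntegral.integral_congr
  intro u hu
  show t ^ ((3 : ℝ) / 2) * (F u / (b - u + γ) *
      (c * (b - u) ^ 2 * Real.exp (-((b - u) ^ 2) / (2 * t)))) =
    Real.sqrt (2 / Real.pi) *
      (F u * ((b - u) ^ 2 / (b - u + γ)) * Real.exp (-((b - u) ^ 2) / (2 * t)))
  have huIcc : u ∈ Icc (m - γ) m := by rwa [Set.uIcc_of_le (by linarith)] at hu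
  have hden : b - u + γ ≠ 0 := by
    have := huIcc.2; have : 0 < b - u + γ := by linarith
    exact this.ne'
  have : t ^ ((3 : ℝ) / 2) * (F u / (b - u + γ) *
      (c * (b - u) ^ 2 * Real.exp (-((b - u) ^ 2) / (2 * t)))) =
      (t ^ ((3 : ℝ) / 2) * c) *
        (F u * ((b - u) ^ 2 / (b - u + γ)) * Real.exp (-((b - u) ^ 2) / (2 * t))) := by
    field_simp
  rw [this, hc]


lemma exp_neg_le_four_div_sq (x : ℝ) (hx : 0 < x) : Real.exp (-x) ≤ 4 / x ^ 2 := by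
  have h1 : x / 2 + 1 ≤ Real.exp (x / 2) := Real.add_one_le_exp _
  have h3 : Real.exp (x / 2) * Real.exp (x / 2) = Real.exp x := by
    rw [← Real.exp_add]; ring_nf
  have h2 : x ^ 2 / 4 ≤ Real.exp x := by nlinarith [Real.exp_pos (x / 2)]
  have h4 : (Real.exp x)⁻¹ ≤ (x ^ 2 / 4)⁻¹ := inv_anti₀ (by positivity) h2
  rw [Real.exp_neg]
  calc (Real.exp x)⁻¹ ≤ (x ^ 2 / 4)⁻¹ := h4
    _ = 4 / x ^ 2 := by field_simp

set_option maxHeartbeats 4000000 in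
lemma core_bound (m ε' δ t b γ u : ℝ) (hm : 0 < m) (hε : 0 < ε')
    (hδ0 : 0 < δ) (hδ1 : δ ≤ 1) (hδε : 6 * δ ≤ ε')
    (ht1 : 1 ≤ t) (hb1 : 1 ≤ b) (hb2m : 2 * m ≤ b)
    (hbA : 30 * m ≤ ε' * b) (hbB : 2560 * m ^ 3 ≤ δ ^ 2 * ε' * b)
    (hbC : 512 * m ^ 2 ≤ δ ^ 2 * ε' * b)
    (hγ0 : 0 ≤ γ) (hγm : γ ≤ m) (hu0 : 0 ≤ u) (hum : u ≤ m) :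
    |(b - u) ^ 2 / (b - u + γ) * Real.exp (-((b - u) ^ 2) / (2 * t)) -
        b * Real.exp (-(b ^ 2) / (2 * t))|
      ≤ ε' + ε' * b * Real.exp (-(b ^ 2) / (2 * t)) := by
  have ht : (0 : ℝ) < t := by linarith
  have hb : (0 : ℝ) < b := by linarith
  set E : ℝ := Real.exp (-(b ^ 2) / (2 * t)) with hE_def
  set Eu : ℝ := Real.exp (-((b - u) ^ 2) / (2 * t)) with hEu_def
  have hE0 : 0 < E := Real.exp_pos _
  have hEu0 : 0 < Eu := Real.exp_pos _
  have hden : 0 < b - u + γ := by linarith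
  have hA : |(b - u) ^ 2 / (b - u + γ) - b| ≤ 5 * m := by
    have heq : (b - u) ^ 2 / (b - u + γ) - b = (u ^ 2 - b * u - b * γ) / (b - u + γ) := by
      field_simp; ring
    rw [heq, abs_div, abs_of_pos hden, div_le_iff₀ hden]
    have hnum : |u ^ 2 - b * u - b * γ| ≤ m ^ 2 + 2 * b * m := by
      rw [abs_le]
      constructor
      · nlinarith [mul_le_mul_of_nonneg_left hum hb.le,
          mul_le_mul_of_nonneg_left hγm hb.le, sq_nonneg u]
      · nlinarith [mul_nonneg hb.le hu0, mul_nonneg hb.le hγ0,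
          pow_le_pow_left₀ hu0 hum 2]
    nlinarith [mul_le_mul_of_nonneg_left hb2m hm.le,
      mul_nonneg hm.le (show (0:ℝ) ≤ γ + m - u by linarith)]
  have hEuE : E ≤ Eu := by
    apply Real.exp_le_exp.2
    rw [div_le_div_iff_of_pos_right (by linarith : (0:ℝ) < 2 * t)]
    nlinarith [mul_nonneg hu0 (show (0:ℝ) ≤ 2 * b - u by linarith)]
  set q : ℝ := (2 * b * u - u ^ 2) / (2 * t) with hq_def
  have hq0 : 0 ≤ q := by
    apply div_nonneg _ (by linarith)
    nlinarith [mul_nonneg hu0 (show (0:ℝ) ≤ 2 * b - u by linarith)]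
  have hnum2 : 2 * b * u - u ^ 2 ≤ 2 * b * m := by
    nlinarith [mul_nonneg (show (0:ℝ) ≤ 2 * b by linarith)
      (show (0:ℝ) ≤ m - u by linarith), sq_nonneg u]
  have hq_le : q ≤ b * m / t := by
    rw [hq_def, div_le_div_iff₀ (by linarith) ht]
    nlinarith [mul_le_mul_of_nonneg_right hnum2 ht.le]
  have hEu_eq : Eu = E * Real.exp q := by
    rw [hE_def, hEu_def, hq_def, ← Real.exp_add]
    congr 1
    field_simp
    ring
  have habs : |(b - u) ^ 2 / (b - u + γ) * Eu - b * E| ≤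
      5 * m * Eu + b * (Eu - E) := by
    have hsplit : (b - u) ^ 2 / (b - u + γ) * Eu - b * E =
        ((b - u) ^ 2 / (b - u + γ) - b) * Eu + b * (Eu - E) := by ring
    rw [hsplit]
    calc |((b - u) ^ 2 / (b - u + γ) - b) * Eu + b * (Eu - E)|
        ≤ |((b - u) ^ 2 / (b - u + γ) - b) * Eu| + |b * (Eu - E)| := abs_add_le _ _
      _ ≤ 5 * m * Eu + b * (Eu - E) := by
          rw [abs_mul, abs_of_pos hEu0,
            abs_of_nonneg (by nlinarith : (0:ℝ) ≤ b * (Eu - E))]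
          nlinarith [abs_nonneg ((b - u) ^ 2 / (b - u + γ) - b)]
  by_cases hcase : b * m / t ≤ δ
  · -- moderate b regime
    have hq_δ : q ≤ δ := le_trans hq_le hcase
    have hexpq : Real.exp q ≤ 3 := by
      calc Real.exp q ≤ Real.exp 1 := Real.exp_le_exp.2 (by linarith)
        _ ≤ 3 := by have := Real.exp_one_lt_d9; linarith
    have hEu3 : Eu ≤ 3 * E := by
      rw [hEu_eq]
      nlinarith [mul_le_mul_of_nonneg_left hexpq hE0.le]
    have hqexp : Real.exp q - 1 ≤ 3 * q := by
      have h5 : 1 - q ≤ Real.exp (-q) := by have := Real.add_one_le_exp (-q); linarith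
      have h6 : Real.exp (-q) * Real.exp q = 1 := by rw [← Real.exp_add]; simp
      nlinarith [mul_le_mul_of_nonneg_right h5 (Real.exp_pos q).le,
        mul_le_mul_of_nonneg_left hexpq hq0]
    have hB1 : b * (Eu - E) ≤ 3 * δ * (b * E) := by
      have e1 : Eu - E = E * (Real.exp q - 1) := by rw [hEu_eq]; ring
      have e2 : E * (Real.exp q - 1) ≤ E * (3 * δ) :=
        mul_le_mul_of_nonneg_left (by linarith) hE0.le
      rw [e1]
      nlinarith [mul_le_mul_of_nonneg_left e2 hb.le]
    have hA1 : 5 * m * Eu ≤ ε' / 2 * (b * E) := by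
      have h15 : 15 * m ≤ ε' / 2 * b := by linarith
      nlinarith [mul_le_mul_of_nonneg_left hEu3 (by positivity : (0:ℝ) ≤ 5 * m),
        mul_le_mul_of_nonneg_right h15 hE0.le]
    calc |(b - u) ^ 2 / (b - u + γ) * Eu - b * E| ≤ 5 * m * Eu + b * (Eu - E) := habs
      _ ≤ ε' / 2 * (b * E) + ε' / 2 * (b * E) := by
          nlinarith [mul_nonneg (show (0:ℝ) ≤ ε' / 2 - 3 * δ by linarith)
            (mul_nonneg hb.le hE0.le)]
      _ = ε' * b * E := by ring
      _ ≤ ε' + ε' * b * E := by linarith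
  · -- large b regime
    push_neg at hcase
    have hδt : δ * t < b * m := by
      rw [lt_div_iff₀ ht] at hcase
      linarith
    have hEu_small : Eu ≤ 256 * m ^ 2 / (δ ^ 2 * b ^ 2) := by
      have harg : b * δ / (8 * m) ≤ (b - u) ^ 2 / (2 * t) := by
        rw [div_le_div_iff₀ (by linarith) (by linarith)]
        nlinarith [mul_le_mul_of_nonneg_left hδt.le hb.le,
          mul_nonneg hm.le (mul_nonneg (show (0:ℝ) ≤ b - 2 * u by linarith)
            (show (0:ℝ) ≤ 3 * b - 2 * u by linarith))]
      have h8 : Eu ≤ Real.exp (-(b * δ / (8 * m))) := by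
        apply Real.exp_le_exp.2
        have := neg_div (2 * t) ((b - u) ^ 2)
        linarith [neg_div (2 * t) ((b - u) ^ 2)]
      have h9 : Real.exp (-(b * δ / (8 * m))) ≤ 4 / (b * δ / (8 * m)) ^ 2 :=
        exp_neg_le_four_div_sq _ (by positivity)
      have h10 : 4 / (b * δ / (8 * m)) ^ 2 = 256 * m ^ 2 / (δ ^ 2 * b ^ 2) := by
        field_simp
        ring
      rw [h10] at h9
      linarith
    have hb2 : b ≤ b ^ 2 := by nlinarith
    have hBig1 : 5 * m * Eu ≤ ε' / 2 := by
      have key : 5 * m * (256 * m ^ 2 / (δ ^ 2 * b ^ 2)) ≤ ε' / 2 := by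
        rw [show 5 * m * (256 * m ^ 2 / (δ ^ 2 * b ^ 2)) =
          1280 * m ^ 3 / (δ ^ 2 * b ^ 2) from by ring,
          div_le_div_iff₀ (by positivity) (by norm_num : (0:ℝ) < 2)]
        nlinarith [mul_le_mul_of_nonneg_left hb2 (by positivity : (0:ℝ) ≤ δ ^ 2 * ε')]
      have := mul_le_mul_of_nonneg_left hEu_small (by positivity : (0:ℝ) ≤ 5 * m)
      linarith
    have hBig2 : b * (Eu - E) ≤ ε' / 2 := by
      have e3 : b * Eu ≤ b * (256 * m ^ 2 / (δ ^ 2 * b ^ 2)) :=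
        mul_le_mul_of_nonneg_left hEu_small hb.le
      have e4 : b * (256 * m ^ 2 / (δ ^ 2 * b ^ 2)) = 256 * m ^ 2 / (δ ^ 2 * b) := by
        field_simp
      have e5 : 256 * m ^ 2 / (δ ^ 2 * b) ≤ ε' / 2 := by
        rw [div_le_div_iff₀ (by positivity) (by norm_num : (0:ℝ) < 2)]
        nlinarith
      nlinarith [mul_nonneg hb.le hE0.le]
    calc |(b - u) ^ 2 / (b - u + γ) * Eu - b * E| ≤ 5 * m * Eu + b * (Eu - E) := habs
      _ ≤ ε' / 2 + ε' / 2 := by linarith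
      _ = ε' := by ring
      _ ≤ ε' + ε' * b * E := by nlinarith [mul_nonneg (mul_nonneg hε.le hb.le) hE0.le]

lemma pointwise_bound (m ε' : ℝ) (hm : 0 < m) (hε : 0 < ε') :
    ∃ T : ℝ, 1 ≤ T ∧ (∀ t b : ℝ, T ≤ t → t ^ ((1 : ℝ) / 4) ≤ b → 2 * m ≤ b) ∧
      ∀ t b γ u : ℝ, T ≤ t → t ^ ((1 : ℝ) / 4) ≤ b → 0 ≤ γ → γ ≤ m →
      u ∈ Icc (m - γ) m →
      |(b - u) ^ 2 / (b - u + γ) * Real.exp (-((b - u) ^ 2) / (2 * t)) -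
          b * Real.exp (-(b ^ 2) / (2 * t))|
        ≤ ε' + ε' * b * Real.exp (-(b ^ 2) / (2 * t)) := by
  set δ : ℝ := min 1 (ε' / 6) with hδ_def
  have hδ0 : 0 < δ := lt_min one_pos (by positivity)
  have hδ1 : δ ≤ 1 := min_le_left _ _
  have hδε : 6 * δ ≤ ε' := by
    have := min_le_right 1 (ε' / 6)
    linarith
  set b₀ : ℝ := 1 + 2 * m + 30 * m / ε' + 2560 * m ^ 3 / (δ ^ 2 * ε')
      + 512 * m ^ 2 / (δ ^ 2 * ε') with hb₀_def
  have h2m : 0 ≤ 2 * m := by positivity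
  have h30 : 0 ≤ 30 * m / ε' := by positivity
  have h2560 : 0 ≤ 2560 * m ^ 3 / (δ ^ 2 * ε') := by positivity
  have h512 : 0 ≤ 512 * m ^ 2 / (δ ^ 2 * ε') := by positivity
  have hb₀1 : 1 ≤ b₀ := by rw [hb₀_def]; linarith
  have hb₀4 : (1:ℝ) ≤ b₀ ^ 4 := by
    have := pow_le_pow_left₀ (by norm_num : (0:ℝ) ≤ 1) hb₀1 4
    simpa using this
  have hb₀b' : ∀ t b : ℝ, b₀ ^ 4 ≤ t → t ^ ((1 : ℝ) / 4) ≤ b → b₀ ≤ b := by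
    intro t b hTt htb
    have h1 : (b₀ ^ 4) ^ ((1 : ℝ) / 4) ≤ t ^ ((1 : ℝ) / 4) :=
      Real.rpow_le_rpow (by positivity) hTt (by norm_num)
    have h2 : (b₀ ^ 4) ^ ((1 : ℝ) / 4) = b₀ := by
      rw [← Real.rpow_natCast b₀ 4, ← Real.rpow_mul (by linarith)]
      norm_num
    exact le_trans (h2 ▸ h1) htb
  refine ⟨b₀ ^ 4, hb₀4, ?_, ?_⟩
  · intro t b hTt htb
    have := hb₀b' t b hTt htb
    rw [hb₀_def] at this
    linarith
  intro t b γ u hTt htb hγ0 hγm hu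
  have ht1 : 1 ≤ t := le_trans hb₀4 hTt
  have ht : (0 : ℝ) < t := by linarith
  have hb₀b : b₀ ≤ b := hb₀b' t b hTt htb
  have hb1 : 1 ≤ b := by rw [hb₀_def] at hb₀b; linarith
  have hb : (0:ℝ) < b := by linarith
  have hb2m : 2 * m ≤ b := by rw [hb₀_def] at hb₀b; linarith
  have hbA : 30 * m ≤ ε' * b := by
    have h1 : 30 * m / ε' ≤ b := by rw [hb₀_def] at hb₀b; linarith
    rw [div_le_iff₀ hε] at h1
    linarith [h1]
  have hbB : 2560 * m ^ 3 ≤ δ ^ 2 * ε' * b := by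
    have h1 : 2560 * m ^ 3 / (δ ^ 2 * ε') ≤ b := by rw [hb₀_def] at hb₀b; linarith
    rw [div_le_iff₀ (by positivity : (0:ℝ) < δ ^ 2 * ε')] at h1
    linarith [h1]
  have hbC : 512 * m ^ 2 ≤ δ ^ 2 * ε' * b := by
    have h1 : 512 * m ^ 2 / (δ ^ 2 * ε') ≤ b := by rw [hb₀_def] at hb₀b; linarith
    rw [div_le_iff₀ (by positivity : (0:ℝ) < δ ^ 2 * ε')] at h1
    linarith [h1]
  exact core_bound m ε' δ t b γ u hm hε hδ0 hδ1 hδε ht1 hb1 hb2m hbA hbB hbC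
    hγ0 hγm (by have := hu.1; linarith) hu.2

/-- For the 3d Bessel process from `0`: the exact identity
`t^{3/2} E[F(b-R_t) 1{γ ≥ R_t-b+m ≥ 0}/(R_t+γ)]
  = √(2/π) ∫_{m-γ}^m F(u) (b-u)²/(b-u+γ) e^{-(b-u)²/(2t)} du`
holds for all `t, b > 0` with `b > m`; moreover as `t → ∞`, `b ≥ t^{1/4}`, uniformly over
`γ ∈ [0,m]` and continuous `F` with `0 ≤ F ≤ m`, the left-hand side equals
`√(2/π) b e^{-b²/(2t)} ∫_{m-γ}^m F(u) du` up to an error at most `ε + ε b e^{-b²/(2t)}`. -/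
theorem bessel_renewal_asymptotics (m : ℝ) (hm : 0 < m) :
    (∀ t b γ : ℝ, 0 < t → 0 < b → m < b → 0 ≤ γ → γ ≤ m →
      ∀ F : ℝ → ℝ, Continuous F → (∀ u, 0 ≤ F u ∧ F u ≤ m) →
        t ^ ((3 : ℝ) / 2) * besselExpectation t b m γ F =
          Real.sqrt (2 / Real.pi) *
            ∫ u in (m - γ)..m,
              F u * ((b - u) ^ 2 / (b - u + γ)) * Real.exp (-((b - u) ^ 2) / (2 * t))) ∧
    (∀ ε : ℝ, 0 < ε → ∃ T : ℝ, 0 < T ∧ ∀ t b γ : ℝ, T ≤ t → t ^ ((1 : ℝ) / 4) ≤ b →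
      0 ≤ γ → γ ≤ m →
      ∀ F : ℝ → ℝ, Continuous F → (∀ u, 0 ≤ F u ∧ F u ≤ m) →
        |t ^ ((3 : ℝ) / 2) * besselExpectation t b m γ F -
            Real.sqrt (2 / Real.pi) * b * Real.exp (-(b ^ 2) / (2 * t)) *
              ∫ u in (m - γ)..m, F u|
          ≤ ε + ε * b * Real.exp (-(b ^ 2) / (2 * t))) := by
  constructor
  · intro t b γ ht hb hmb hγ0 hγm F _ _
    exact exact_id t b m γ ht hm hmb hγ0 hγm F
  · intro ε hε
    have hε' : 0 < ε / m ^ 2 := by positivity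
    obtain ⟨T, hT1, hTb, hT⟩ := pointwise_bound m (ε / m ^ 2) hm hε'
    refine ⟨T, by linarith, ?_⟩
    intro t b γ hTt htb hγ0 hγm F hF hFb
    have ht : (0 : ℝ) < t := by linarith
    have hb : (0 : ℝ) < b := lt_of_lt_of_le (Real.rpow_pos_of_pos ht _) htb
    have hb2m : 2 * m ≤ b := hTb t b hTt htb
    have hmb : m < b := by linarith
    rw [exact_id t b m γ ht hm hmb hγ0 hγm F]
    set E : ℝ := Real.exp (-(b ^ 2) / (2 * t)) with hE_def
    have hE0 : 0 < E := Real.exp_pos _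
    have hmγ : m - γ ≤ m := by linarith
    have hco1 : ContinuousOn
        (fun u : ℝ => F u * ((b - u) ^ 2 / (b - u + γ)) * Real.exp (-((b - u) ^ 2) / (2 * t)))
        (Set.uIcc (m - γ) m) := by
      have hfrac : ContinuousOn (fun u : ℝ => (b - u) ^ 2 / (b - u + γ))
          (Set.uIcc (m - γ) m) := by
        apply ContinuousOn.div
        · fun_prop
        · fun_prop
        · intro x hx
          rw [Set.uIcc_of_le hmγ] at hx
          have hx2 := hx.2
          exact ne_of_gt (by linarith)
      exact (hF.continuousOn.mul hfrac).mul (by fun_prop)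
    have hint1 : IntervalIntegrable
        (fun u : ℝ => F u * ((b - u) ^ 2 / (b - u + γ)) * Real.exp (-((b - u) ^ 2) / (2 * t)))
        MeasureTheory.volume (m - γ) m := hco1.intervalIntegrable
    have hint2 : IntervalIntegrable (fun u : ℝ => F u * (b * E))
        MeasureTheory.volume (m - γ) m := (hF.mul continuous_const).intervalIntegrable _ _
    have hrw : Real.sqrt (2 / Real.pi) * b * E * (∫ u in (m - γ)..m, F u) =
        Real.sqrt (2 / Real.pi) * ∫ u in (m - γ)..m, F u * (b * E) := by
      rw [intervalIntegral.integral_mul_const]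
      ring
    rw [hrw, ← mul_sub, ← intervalIntegral.integral_sub hint1 hint2, abs_mul,
      abs_of_nonneg (Real.sqrt_nonneg _)]
    have hbound : ∀ x ∈ Set.uIoc (m - γ) m,
        ‖F x * ((b - x) ^ 2 / (b - x + γ)) * Real.exp (-((b - x) ^ 2) / (2 * t)) -
          F x * (b * E)‖ ≤ m * (ε / m ^ 2 + ε / m ^ 2 * b * E) := by
      intro x hx
      have hx' : x ∈ Set.Icc (m - γ) m := by
        rw [Set.uIoc_of_le hmγ] at hx
        exact ⟨hx.1.le, hx.2⟩
      have hp := hT t b γ x hTt htb hγ0 hγm hx'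
      rw [Real.norm_eq_abs,
        show F x * ((b - x) ^ 2 / (b - x + γ)) * Real.exp (-((b - x) ^ 2) / (2 * t)) -
            F x * (b * E) =
          F x * ((b - x) ^ 2 / (b - x + γ) * Real.exp (-((b - x) ^ 2) / (2 * t)) - b * E)
          from by ring, abs_mul]
      have hF0 := (hFb x).1
      have hFm := (hFb x).2
      have hFx : |F x| ≤ m := by rw [abs_of_nonneg hF0]; exact hFm
      exact mul_le_mul hFx hp (abs_nonneg _) hm.le
    have h6 := intervalIntegral.norm_integral_le_of_norm_le_const hbound
    rw [Real.norm_eq_abs, show m - (m - γ) = γ from by ring, abs_of_nonneg hγ0] at h6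
    have hC : 0 ≤ m * (ε / m ^ 2 + ε / m ^ 2 * b * E) := by
      apply mul_nonneg hm.le
      have : 0 ≤ ε / m ^ 2 * b * E :=
        mul_nonneg (mul_nonneg hε'.le hb.le) hE0.le
      positivity
    have h5 : |∫ x in (m - γ)..m,
        (F x * ((b - x) ^ 2 / (b - x + γ)) * Real.exp (-((b - x) ^ 2) / (2 * t)) -
          F x * (b * E))| ≤ m * (ε / m ^ 2 + ε / m ^ 2 * b * E) * m := by
      calc |∫ x in (m - γ)..m,
          (F x * ((b - x) ^ 2 / (b - x + γ)) * Real.exp (-((b - x) ^ 2) / (2 * t)) -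
            F x * (b * E))| ≤ m * (ε / m ^ 2 + ε / m ^ 2 * b * E) * γ := h6
        _ ≤ m * (ε / m ^ 2 + ε / m ^ 2 * b * E) * m :=
            mul_le_mul_of_nonneg_left hγm hC
    have hmm2 : m * (ε / m ^ 2 + ε / m ^ 2 * b * E) * m = ε + ε * b * E := by
      field_simp
    have h2π : Real.sqrt (2 / Real.pi) ≤ 1 := by
      rw [Real.sqrt_le_one]
      rw [div_le_one Real.pi_pos]
      linarith [Real.pi_gt_three]
    calc Real.sqrt (2 / Real.pi) * |∫ x in (m - γ)..m,
          (F x * ((b - x) ^ 2 / (b - x + γ)) * Real.exp (-((b - x) ^ 2) / (2 * t)) -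
            F x * (b * E))|
        ≤ 1 * (m * (ε / m ^ 2 + ε / m ^ 2 * b * E) * m) :=
          mul_le_mul h2π h5 (abs_nonneg _) one_pos.le
      _ = ε + ε * b * E := by rw [one_mul, hmm2]
end
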